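/- With ℓ_{2n} = ℓ_{2n+1}, ℓ_n/ℓ_{n+1} → 1 as n → ∞, ℓ̄_{2n} = 4ℓ_{2n}/3, ℓ̄_{2n+1} = 2ℓ_{2n+1}/3, for any fixed integer N the sequence ℓ̄_{n+N}/ℓ_n does not converge as n → ∞: along even n shifted by even N it tends to 4/3 and along odd n it tends to 2/3 (and vice versa for odd N). Consequently, if φ is a C¹ diffeomorphism of [0,1] mapping I_n onto Ī_{n+N} for all n, with both families of intervals accumulating only at 1, a contradiction arises, so no such C¹ diffeomorphism exists. -/

import Mathlib

open Filter

/-- Difference of consecutive partial sums. -/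
lemma stmt15_partial_step (f : ℤ → ℝ) (s : ℤ → ℝ)
    (h : ∀ n : ℤ, HasSum (fun i : {i : ℤ // i < n} => f i.1) (s n)) (n : ℤ) :
    s (n + 1) = s n + f n := by
  have h1 : HasSum (Set.indicator {i : ℤ | i < n} f) (s n) :=
    hasSum_subtype_iff_indicator.1 (h n)
  have h2 : HasSum (Set.indicator {i : ℤ | i < n + 1} f) (s (n + 1)) :=
    hasSum_subtype_iff_indicator.1 (h (n + 1))
  have h3 : HasSum (fun x : ℤ => if x = n then f n else 0) (f n) := hasSum_ite_eq n (f n)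
  have h4 : (Set.indicator {i : ℤ | i < n + 1} f)
      = fun x => Set.indicator {i : ℤ | i < n} f x + (if x = n then f n else 0) := by
    funext x
    by_cases hx : x = n
    · subst hx; simp [Set.indicator_apply]
    · have hiff : x < n + 1 ↔ x < n := by omega
      simp only [Set.indicator_apply, Set.mem_setOf_eq, hiff, hx, if_false, add_zero]
  rw [h4] at h2
  have := h1.add h3
  exact h2.unique this

/-- The shift lemma: ratios over any fixed shift tend to 1. -/
lemma stmt15_ratio_shift (ℓ : ℤ → ℝ) (hpos : ∀ n : ℤ, 0 < ℓ n)
    (hratio : Tendsto (fun n : ℤ => ℓ n / ℓ (n + 1)) atTop (nhds 1)) :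
    ∀ N : ℤ, Tendsto (fun n : ℤ => ℓ (n + N) / ℓ n) atTop (nhds 1) := by
  have hnat : ∀ M : ℕ, Tendsto (fun n : ℤ => ℓ (n + (M : ℤ)) / ℓ n) atTop (nhds 1) := by
    intro M
    induction M with
    | zero =>
      have : (fun n : ℤ => ℓ (n + ((0:ℕ) : ℤ)) / ℓ n) = fun _ => (1:ℝ) := by
        funext n; simp [div_self (hpos n).ne']
      rw [this]; exact tendsto_const_nhds
    | succ M ih =>
      have hshift : Tendsto (fun n : ℤ => n + (M : ℤ)) atTop atTop :=
        tendsto_atTop_add_const_right _ _ tendsto_id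
      have h1 : Tendsto (fun n : ℤ => ℓ (n + (M:ℤ)) / ℓ (n + (M:ℤ) + 1)) atTop (nhds 1) :=
        hratio.comp hshift
      have h2 := (h1.inv₀ one_ne_zero).mul ih
      have heqf : (fun n : ℤ => (ℓ (n + (M:ℤ)) / ℓ (n + (M:ℤ) + 1))⁻¹ * (ℓ (n + (M:ℤ)) / ℓ n))
          = fun n : ℤ => ℓ (n + ((M+1 : ℕ) : ℤ)) / ℓ n := by
        funext n
        have e1 : ℓ (n + (M:ℤ)) ≠ 0 := (hpos _).ne'
        have e2 : ℓ n ≠ 0 := (hpos _).ne'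
        have ecast : (n + ((M+1 : ℕ) : ℤ)) = n + (M:ℤ) + 1 := by push_cast; ring
        rw [ecast, inv_div]
        field_simp
      rw [heqf] at h2
      simpa using h2
  intro N
  obtain ⟨M, rfl | rfl⟩ := Int.eq_nat_or_neg N
  · exact hnat M
  · have h1 := (hnat M).inv₀ one_ne_zero
    have hshift : Tendsto (fun n : ℤ => n + -(M:ℤ)) atTop atTop :=
      tendsto_atTop_add_const_right _ _ tendsto_id
    have h2 := h1.comp hshift
    have heqf : ((fun n : ℤ => (ℓ (n + (M:ℤ)) / ℓ n)⁻¹) ∘ fun n : ℤ => n + -(M:ℤ))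
        = fun n : ℤ => ℓ (n + -(M:ℤ)) / ℓ n := by
      funext n
      have e : n + -(M:ℤ) + (M:ℤ) = n := by ring
      simp only [Function.comp, inv_div, e]
    rw [heqf] at h2
    simpa using h2

/-- First part: the ratios `lb (n+N) / ℓ n` never converge. -/
lemma stmt15_no_limit (ℓ lb : ℤ → ℝ) (hpos : ∀ n : ℤ, 0 < ℓ n)
    (hratio : Tendsto (fun n : ℤ => ℓ n / ℓ (n + 1)) atTop (nhds 1))
    (hlb : ∀ n : ℤ, lb (2 * n) = 4 * ℓ (2 * n) / 3 ∧ lb (2 * n + 1) = 2 * ℓ (2 * n + 1) / 3) :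
    ∀ N : ℤ, ¬ ∃ L : ℝ, Tendsto (fun n : ℤ => lb (n + N) / ℓ n) atTop (nhds L) := by
  have hlb' : ∀ m : ℤ, lb m = (if Even m then (4:ℝ)/3 else 2/3) * ℓ m := by
    intro m
    rcases Int.even_or_odd m with ⟨k, hk⟩ | ⟨k, hk⟩
    · have hk' : m = 2 * k := by omega
      subst hk'
      rw [(hlb k).1, if_pos (even_two_mul k)]; ring
    · subst hk
      have hne : ¬ Even (2 * k + 1) := by rw [Int.even_iff]; omega
      rw [(hlb k).2, if_neg hne]; ring
  rintro N ⟨L, hL⟩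
  have hshiftN := stmt15_ratio_shift ℓ hpos hratio N
  have h2k : Tendsto (fun k : ℤ => 2 * k) atTop atTop := by
    apply tendsto_atTop_mono' atTop ?_ tendsto_id
    filter_upwards [eventually_ge_atTop (0:ℤ)] with k hk
    simp only [id]; omega
  have key : ∀ (c : ℤ → ℤ), Tendsto c atTop atTop →
      (∀ k, (if Even (c k + N) then (4:ℝ)/3 else 2/3) = (4:ℝ)/3 ∨
            (if Even (c k + N) then (4:ℝ)/3 else 2/3) = (2:ℝ)/3) := by
    intro c _ k; by_cases h : Even (c k + N) <;> simp [h]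
  -- limit along a subsequence c with prescribed parity
  have hsub : ∀ (c : ℤ → ℤ) (v : ℝ), Tendsto c atTop atTop →
      (∀ k, (if Even (c k + N) then (4:ℝ)/3 else 2/3) = v) → L = v := by
    intro c v hc hv
    have h1 : Tendsto (fun k : ℤ => lb (c k + N) / ℓ (c k)) atTop (nhds L) := hL.comp hc
    have h2 : Tendsto (fun k : ℤ => ℓ (c k + N) / ℓ (c k)) atTop (nhds 1) := hshiftN.comp hc
    have h3 : Tendsto (fun k : ℤ => v * (ℓ (c k + N) / ℓ (c k))) atTop (nhds (v * 1)) :=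
      h2.const_mul v
    have heqf : (fun k : ℤ => lb (c k + N) / ℓ (c k))
        = fun k : ℤ => v * (ℓ (c k + N) / ℓ (c k)) := by
      funext k
      rw [hlb' (c k + N), hv k, mul_div_assoc]
    rw [heqf] at h1
    have := tendsto_nhds_unique h1 h3
    simpa using this
  have hA : L = 4/3 := by
    apply hsub (fun k => 2 * k + -N) _ (tendsto_atTop_add_const_right _ _ h2k)
    intro k
    have he : Even (2 * k + -N + N) := by
      have : 2 * k + -N + N = 2 * k := by ring
      rw [this]; exact even_two_mul k
    rw [if_pos he]
  have hB : L = 2/3 := by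
    apply hsub (fun k => 2 * k + 1 + -N) _
      (tendsto_atTop_add_const_right _ _ (tendsto_atTop_add_const_right _ _ h2k))
    intro k
    have he : ¬ Even (2 * k + 1 + -N + N) := by rw [Int.even_iff]; omega
    rw [if_neg he]
  rw [hA] at hB; norm_num at hB

theorem stmt15 (ℓ lb : ℤ → ℝ) (hpos : ∀ n : ℤ, 0 < ℓ n)
    (hsum : HasSum ℓ 1)
    (heq : ∀ n : ℤ, ℓ (2 * n) = ℓ (2 * n + 1))
    (hratio : Tendsto (fun n : ℤ => ℓ n / ℓ (n + 1)) atTop (nhds 1))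
    (hlb : ∀ n : ℤ, lb (2 * n) = 4 * ℓ (2 * n) / 3 ∧ lb (2 * n + 1) = 2 * ℓ (2 * n + 1) / 3)
    (S Sb : ℤ → ℝ)
    (hS : ∀ n : ℤ, HasSum (fun i : {i : ℤ // i < n} => ℓ i.1) (S n))
    (hSb : ∀ n : ℤ, HasSum (fun i : {i : ℤ // i < n} => lb i.1) (Sb n)) :
    (∀ N : ℤ, ¬ ∃ L : ℝ, Tendsto (fun n : ℤ => lb (n + N) / ℓ n) atTop (nhds L)) ∧
      ∀ N : ℤ, ¬ ∃ φ : ℝ → ℝ, ContDiffOn ℝ 1 φ (Set.Icc 0 1) ∧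
        StrictMonoOn φ (Set.Icc 0 1) ∧ φ 0 = 0 ∧ φ 1 = 1 ∧
        φ '' Set.Icc 0 1 = Set.Icc 0 1 ∧
        (∀ x ∈ Set.Icc (0:ℝ) 1, 0 < derivWithin φ (Set.Icc 0 1) x) ∧
        ∀ n : ℤ, φ '' Set.Icc (S n) (S (n + 1)) = Set.Icc (Sb (n + N)) (Sb (n + N + 1)) := by
  have part1 := stmt15_no_limit ℓ lb hpos hratio hlb
  refine ⟨part1, ?_⟩
  rintro N ⟨φ, hC1, hmono, -, -, -, -, himg⟩
  apply part1 N
  set D := Set.Icc (0:ℝ) 1 with hD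
  have hSstep : ∀ n : ℤ, S (n + 1) = S n + ℓ n := stmt15_partial_step ℓ S hS
  have hSbstep : ∀ n : ℤ, Sb (n + 1) = Sb n + lb n := stmt15_partial_step lb Sb hSb
  -- basic bounds on S
  have hInd : ∀ n : ℤ, HasSum (Set.indicator {i : ℤ | i < n} ℓ) (S n) :=
    fun n => hasSum_subtype_iff_indicator.1 (hS n)
  have hSle : ∀ n : ℤ, S n ≤ 1 := by
    intro n
    exact hasSum_le (fun i => Set.indicator_le_self' (fun x _ => (hpos x).le) i) (hInd n) hsum
  have hSnonneg : ∀ n : ℤ, 0 ≤ S n := by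
    intro n
    exact (hInd n).nonneg fun i => Set.indicator_nonneg (fun x _ => (hpos x).le) i
  have hSpos : ∀ n : ℤ, 0 < S n := by
    intro n
    have h := hSstep (n - 1)
    have h' : S (n - 1 + 1) = S n := by norm_num
    rw [h'] at h
    have := hSnonneg (n - 1)
    have := hpos (n - 1)
    linarith
  have hlt : ∀ n : ℤ, S n < S (n + 1) := by
    intro n; have := hSstep n; have := hpos n; linarith
  have hsubD : ∀ n : ℤ, Set.Icc (S n) (S (n + 1)) ⊆ D := by
    intro n x hx
    exact ⟨le_trans (hSpos n).le hx.1, le_trans hx.2 (hSle _)⟩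
  -- S tends to 1
  have hStend : Tendsto S atTop (nhds 1) := by
    rw [Metric.tendsto_atTop]
    intro ε hε
    have hev : ∀ᶠ s : Finset ℤ in atTop, (∑ i ∈ s, ℓ i) ∈ Metric.ball (1:ℝ) ε :=
      hsum.eventually (Metric.ball_mem_nhds (1:ℝ) hε)
    obtain ⟨F, hF⟩ := hev.exists
    rw [Metric.mem_ball, Real.dist_eq] at hF
    obtain ⟨M, hM⟩ := F.exists_le
    refine ⟨M + 1, fun n hn => ?_⟩
    have hFsub : ∀ i ∈ F, i ∈ {i : ℤ | i < n} := by
      intro i hi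
      have := hM i hi
      simp only [Set.mem_setOf_eq]; omega
    have hsumF : ∑ i ∈ F, ℓ i ≤ S n := by
      have h1 : ∑ i ∈ F, Set.indicator {i : ℤ | i < n} ℓ i ≤ S n :=
        sum_le_hasSum F (fun i _ => Set.indicator_nonneg (fun x _ => (hpos x).le) i) (hInd n)
      have h2 : ∑ i ∈ F, Set.indicator {i : ℤ | i < n} ℓ i = ∑ i ∈ F, ℓ i :=
        Finset.sum_congr rfl fun i hi => Set.indicator_of_mem (hFsub i hi) ℓ
      rw [h2] at h1; exact h1
    rw [Real.dist_eq]
    have habs := abs_lt.1 hF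
    have h1 : 1 - ε < S n := by linarith [habs.1]
    have h2 : S n ≤ 1 := hSle n
    rw [abs_of_nonpos (by linarith)]
    linarith
  -- endpoints of the image intervals
  have hend : ∀ n : ℤ, φ (S n) = Sb (n + N) ∧ φ (S (n + 1)) = Sb (n + N + 1) := by
    intro n
    have hab := (hlt n).le
    have haI : S n ∈ Set.Icc (S n) (S (n + 1)) := Set.left_mem_Icc.2 hab
    have hbI : S (n + 1) ∈ Set.Icc (S n) (S (n + 1)) := Set.right_mem_Icc.2 hab
    have him := himg n
    have hcd : Sb (n + N) ≤ Sb (n + N + 1) := by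
      have hne : (Set.Icc (Sb (n + N)) (Sb (n + N + 1))).Nonempty := by
        rw [← him]; exact ⟨φ (S n), Set.mem_image_of_mem φ haI⟩
      exact Set.nonempty_Icc.1 hne
    have hmema : φ (S n) ∈ Set.Icc (Sb (n + N)) (Sb (n + N + 1)) := by
      rw [← him]; exact Set.mem_image_of_mem φ haI
    have hmemb : φ (S (n + 1)) ∈ Set.Icc (Sb (n + N)) (Sb (n + N + 1)) := by
      rw [← him]; exact Set.mem_image_of_mem φ hbI
    constructor
    · obtain ⟨x, hx, hφx⟩ : Sb (n + N) ∈ φ '' Set.Icc (S n) (S (n + 1)) := by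
        rw [him]; exact Set.left_mem_Icc.2 hcd
      have hax : φ (S n) ≤ φ x := by
        rcases eq_or_lt_of_le hx.1 with h | h
        · rw [h]
        · exact (hmono (hsubD n haI) (hsubD n hx) h).le
      rw [hφx] at hax
      exact le_antisymm hax hmema.1
    · obtain ⟨x, hx, hφx⟩ : Sb (n + N + 1) ∈ φ '' Set.Icc (S n) (S (n + 1)) := by
        rw [him]; exact Set.right_mem_Icc.2 hcd
      have hax : φ x ≤ φ (S (n + 1)) := by
        rcases eq_or_lt_of_le hx.2 with h | h
        · rw [h]
        · exact (hmono (hsubD n hx) (hsubD n hbI) h).le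
      rw [hφx] at hax
      exact le_antisymm hmemb.2 hax
  -- mean value theorem on each interval
  have hmvt : ∀ n : ℤ, ∃ ξ ∈ Set.Ioo (S n) (S (n + 1)),
      derivWithin φ D ξ = lb (n + N) / ℓ n := by
    intro n
    have hab := hlt n
    have hcont : ContinuousOn φ (Set.Icc (S n) (S (n + 1))) :=
      hC1.continuousOn.mono (hsubD n)
    have hIoo : Set.Ioo (S n) (S (n + 1)) ⊆ Set.Ioo (0:ℝ) 1 := by
      intro x hx
      exact ⟨lt_trans (hSpos n) hx.1, lt_of_lt_of_le hx.2 (hSle _)⟩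
    have hdiff : DifferentiableOn ℝ φ D := hC1.differentiableOn one_ne_zero
    have hkey : ∀ x ∈ Set.Ioo (S n) (S (n + 1)), HasDerivAt φ (derivWithin φ D x) x := by
      intro x hx
      have hxI : D ∈ nhds x :=
        mem_nhds_iff.2 ⟨Set.Ioo 0 1, Set.Ioo_subset_Icc_self, isOpen_Ioo, hIoo hx⟩
      have hdx : DifferentiableAt ℝ φ x :=
        (hdiff x (hsubD n (Set.Ioo_subset_Icc_self hx))).differentiableAt hxI
      rw [derivWithin_of_mem_nhds hxI]
      exact hdx.hasDerivAt
    obtain ⟨ξ, hξ, hval⟩ := exists_hasDerivAt_eq_slope φ (derivWithin φ D) hab hcont hkey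
    refine ⟨ξ, hξ, ?_⟩
    rw [hval, (hend n).1, (hend n).2, hSbstep (n + N), hSstep n,
      add_sub_cancel_left, add_sub_cancel_left]
  choose ξ hξmem hξval using hmvt
  have hξ1 : Tendsto ξ atTop (nhds 1) := by
    have hupper : Tendsto (fun n : ℤ => S (n + 1)) atTop (nhds 1) :=
      hStend.comp (tendsto_atTop_add_const_right _ 1 tendsto_id)
    exact tendsto_of_tendsto_of_tendsto_of_le_of_le hStend hupper
      (fun n => (hξmem n).1.le) (fun n => (hξmem n).2.le)
  have hξD : Tendsto ξ atTop (nhdsWithin 1 D) := by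
    rw [tendsto_nhdsWithin_iff]
    exact ⟨hξ1, Eventually.of_forall fun n => hsubD n (Set.Ioo_subset_Icc_self (hξmem n))⟩
  have hcd : ContinuousOn (derivWithin φ D) D :=
    hC1.continuousOn_derivWithin (uniqueDiffOn_Icc one_pos) le_rfl
  have h1D : (1:ℝ) ∈ D := Set.right_mem_Icc.2 zero_le_one
  have hfinal : Tendsto (fun n : ℤ => derivWithin φ D (ξ n)) atTop
      (nhds (derivWithin φ D 1)) := Tendsto.comp (hcd 1 h1D) hξD
  exact ⟨derivWithin φ D 1, hfinal.congr fun n => hξval n⟩
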